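/- KL bound for distilling EBMs into ARMs: for all r, q : 𝒮(x) × 𝒜 → ℝ and every prompt x, KL(p^EBM_{R_r}(·|x), p^ARM_q(·|x)) ≤ 2T · max_{s ∈ 𝒮(x), y ∈ 𝒜} |q*(s,y) − q(s,y)|, where q* = M(r). -/

import Mathlib

open Finset

/-! Contexts extending a fixed prompt `x` by `t < T` vocabulary tokens; a context is a
prefix of vocabulary tokens of length `< T`.  `none : Option V` plays the role of `EOS`. -/

/-- Contexts extending the prompt by fewer than `T` vocabulary tokens. -/
abbrev Ctx (V : Type) (T : ℕ) := Σ t : Fin T, Fin (t : ℕ) → V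

/-- Admissible next tokens at a context: only `EOS` (= `none`) at maximal contexts. -/
def adm (V : Type) [Fintype V] (T : ℕ) (s : Ctx V T) : Finset (Option V) :=
  if (s.1 : ℕ) + 1 = T then {none} else Finset.univ

/-- Soft value `V_q(s) = log ∑_{j admissible at s} exp q(s, j)`. -/
noncomputable def Vq (V : Type) [Fintype V] (T : ℕ)
    (q : Ctx V T × Option V → ℝ) (s : Ctx V T) : ℝ :=
  Real.log (∑ a ∈ adm V T s, Real.exp (q (s, a)))

/-- Next-token policy `π_q(j | s) = exp (q(s,j) - V_q(s))`. -/
noncomputable def piq (V : Type) [Fintype V] (T : ℕ)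
    (q : Ctx V T × Option V → ℝ) (s : Ctx V T) (a : Option V) : ℝ :=
  Real.exp (q (s, a) - Vq V T q s)

/-- Extending a context by one vocabulary token. -/
def ext (V : Type) (T : ℕ) (s : Ctx V T) (v : V) (h : (s.1 : ℕ) + 1 < T) : Ctx V T :=
  ⟨⟨(s.1 : ℕ) + 1, h⟩, Fin.snoc s.2 v⟩

/-- The strict prefix of length `i` of (the vocabulary part of) a finished response `y`. -/
def pref (V : Type) (T : ℕ) (y : Ctx V T) (i : Fin (y.1 : ℕ)) : Ctx V T :=
  ⟨⟨(i : ℕ), lt_trans i.isLt y.1.isLt⟩, fun j => y.2 (Fin.castLE (le_of_lt i.isLt) j)⟩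

/-- The mapping `M` (backward recursion), as a function of the depth of the context. -/
noncomputable def Mgo (V : Type) [Fintype V] (T : ℕ) (r : Ctx V T × Option V → ℝ)
    (t : ℕ) (ht : t < T) (s : Fin t → V) (a : Option V) : ℝ :=
  match a with
  | none => r (⟨⟨t, ht⟩, s⟩, none)
  | some v =>
    r (⟨⟨t, ht⟩, s⟩, some v) +
      if h : t + 1 < T then
        Real.log (∑ b ∈ adm V T ⟨⟨t + 1, h⟩, Fin.snoc s v⟩,
          Real.exp (Mgo V T r (t + 1) h (Fin.snoc s v) b))
      else 0
termination_by T - t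
decreasing_by omega

/-- The mapping `q = M(r)`: `q(s, EOS) = r(s, EOS)` and
`q(s, y) = r(s, y) + V_q(s ⊕ y)` for a vocabulary token `y`. -/
noncomputable def Mmap (V : Type) [Fintype V] (T : ℕ)
    (r : Ctx V T × Option V → ℝ) : Ctx V T × Option V → ℝ :=
  fun p => Mgo V T r (p.1.1 : ℕ) p.1.1.isLt p.1.2 p.2

/-- The inverse mapping `r = M⁻¹(q)`: `r(s, EOS) = q(s, EOS)` and
`r(s, y) = q(s, y) - V_q(s ⊕ y)` for a vocabulary token `y`. -/
noncomputable def Minv (V : Type) [Fintype V] (T : ℕ)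
    (q : Ctx V T × Option V → ℝ) : Ctx V T × Option V → ℝ :=
  fun p =>
    match p with
    | (s, none) => q (s, none)
    | (s, some v) =>
      q (s, some v) - if h : (s.1 : ℕ) + 1 < T then Vq V T q (ext V T s v h) else 0

/-- Autoregressive probability of the finished response `y ⊕ EOS`. -/
noncomputable def pARM (V : Type) [Fintype V] (T : ℕ)
    (q : Ctx V T × Option V → ℝ) (y : Ctx V T) : ℝ :=
  (∏ i : Fin (y.1 : ℕ), piq V T q (pref V T y i) (some (y.2 i))) * piq V T q y none

/-- Sequence-level reward `R_r(x, y) = ∑_t r(x ⊕ y_{<t}, y_t)` of the finished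
response `y ⊕ EOS`. -/
noncomputable def Rr (V : Type) [Fintype V] (T : ℕ)
    (r : Ctx V T × Option V → ℝ) (y : Ctx V T) : ℝ :=
  (∑ i : Fin (y.1 : ℕ), r (pref V T y i, some (y.2 i))) + r (y, none)

/-- Sequence-level log-partition `A^EBM_{R_r}(x)`. -/
noncomputable def Aebm (V : Type) [Fintype V] (T : ℕ)
    (r : Ctx V T × Option V → ℝ) : ℝ :=
  Real.log (∑ y : Ctx V T, Real.exp (Rr V T r y))

/-- EBM probability of the finished response `y ⊕ EOS`. -/
noncomputable def pEBM (V : Type) [Fintype V] (T : ℕ)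
    (r : Ctx V T × Option V → ℝ) (y : Ctx V T) : ℝ :=
  Real.exp (Rr V T r y - Aebm V T r)

lemma ctx_ext {V : Type} {T : ℕ} : ∀ (s s' : Ctx V T), ((s.1:ℕ) = (s'.1:ℕ)) →
    (∀ (j : ℕ) (hj : j < (s.1:ℕ)) (hj' : j < (s'.1:ℕ)), s.2 ⟨j,hj⟩ = s'.2 ⟨j,hj'⟩) → s = s' := by
  rintro ⟨⟨t,ht⟩, f⟩ ⟨⟨t',ht'⟩, g⟩ h1 h2
  dsimp at h1
  subst h1
  have : f = g := funext fun j => h2 j.1 j.2 j.2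
  subst this
  rfl

lemma none_mem_adm (V : Type) [Fintype V] (T : ℕ) (s : Ctx V T) : none ∈ adm V T s := by
  unfold adm; split <;> simp

lemma adm_nonempty (V : Type) [Fintype V] (T : ℕ) (s : Ctx V T) : (adm V T s).Nonempty :=
  ⟨none, none_mem_adm V T s⟩

lemma sum_exp_pos {α : Type*} (A : Finset α) (hA : A.Nonempty) (f : α → ℝ) :
    0 < ∑ a ∈ A, Real.exp (f a) :=
  Finset.sum_pos (fun a _ => Real.exp_pos _) hA

/-- partition function of the suffix tree -/
noncomputable def Zt (V : Type) [Fintype V] (T : ℕ) (r : Ctx V T × Option V → ℝ) :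
    ∀ (t : ℕ), t < T → (Fin t → V) → ℝ
  | t, ht, s =>
    Real.exp (r (⟨⟨t, ht⟩, s⟩, none)) +
      if h : t + 1 < T then
        ∑ v : V, Real.exp (r (⟨⟨t, ht⟩, s⟩, some v)) * Zt V T r (t+1) h (Fin.snoc s v)
      else 0
termination_by t => T - t
decreasing_by omega

lemma Zt_pos (V : Type) [Fintype V] (T : ℕ) (r : Ctx V T × Option V → ℝ) :
    ∀ (t : ℕ) (ht : t < T) (s : Fin t → V), 0 < Zt V T r t ht s := by
  intro t ht s
  rw [Zt]
  have h2 : 0 ≤ (if h : t + 1 < T then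
      ∑ v : V, Real.exp (r (⟨⟨t, ht⟩, s⟩, some v)) * Zt V T r (t+1) h (Fin.snoc s v)
    else 0) := by
    split
    · exact Finset.sum_nonneg fun v _ =>
        mul_nonneg (Real.exp_pos _).le (Zt_pos V T r _ _ _).le
    · exact le_refl 0
  linarith [Real.exp_pos (r (⟨⟨t, ht⟩, s⟩, none))]
termination_by t => T - t
decreasing_by omega

/-- Key lemma 1: the sum of exp of Mgo over admissible tokens equals Zt. -/
lemma sum_exp_Mgo (V : Type) [Fintype V] (T : ℕ) (r : Ctx V T × Option V → ℝ) :
    ∀ (t : ℕ) (ht : t < T) (s : Fin t → V),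
      ∑ a ∈ adm V T ⟨⟨t, ht⟩, s⟩, Real.exp (Mgo V T r t ht s a) = Zt V T r t ht s := by
  intro t ht s
  rw [Zt]
  by_cases h : t + 1 < T
  · have hadm : adm V T ⟨⟨t, ht⟩, s⟩ = Finset.univ := by
      unfold adm; dsimp only; rw [if_neg]; omega
    rw [hadm, dif_pos h]
    rw [Fintype.sum_option]
    congr 1
    · rw [Mgo]
    · refine Finset.sum_congr rfl fun v _ => ?_
      rw [Mgo, dif_pos h, Real.exp_add, sum_exp_Mgo V T r (t+1) h (Fin.snoc s v),
        Real.exp_log (Zt_pos V T r _ _ _)]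
  · have hadm : adm V T ⟨⟨t, ht⟩, s⟩ = {none} := by
      unfold adm; dsimp only; rw [if_pos]; omega
    rw [hadm, dif_neg h, Finset.sum_singleton, add_zero, Mgo]
termination_by t => T - t
decreasing_by omega

lemma Vq_Mmap (V : Type) [Fintype V] (T : ℕ) (r : Ctx V T × Option V → ℝ)
    (t : ℕ) (ht : t < T) (s : Fin t → V) :
    Vq V T (Mmap V T r) ⟨⟨t, ht⟩, s⟩ = Real.log (Zt V T r t ht s) := by
  unfold Vq
  rw [← sum_exp_Mgo V T r t ht s]
  rfl

lemma Mgo_some (V : Type) [Fintype V] (T : ℕ) (r : Ctx V T × Option V → ℝ)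
    (t : ℕ) (ht : t < T) (h : t + 1 < T) (s : Fin t → V) (v : V) :
    Mgo V T r t ht s (some v) =
      r (⟨⟨t, ht⟩, s⟩, some v) + Vq V T (Mmap V T r) ⟨⟨t+1, h⟩, Fin.snoc s v⟩ := by
  rw [Mgo, dif_pos h, Vq_Mmap, sum_exp_Mgo]

lemma snoc_lt {V : Type} {t : ℕ} (s : Fin t → V) (v : V) (j : ℕ) (hj : j < t) (hj' : j < t + 1) :
    (Fin.snoc s v : Fin (t+1) → V) ⟨j, hj'⟩ = s ⟨j, hj⟩ := by
  have h : (⟨j, hj'⟩ : Fin (t+1)) = Fin.castSucc ⟨j, hj⟩ := Fin.ext (by simp)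
  rw [h, Fin.snoc_castSucc]

lemma pref_snoc_castSucc (V : Type) (T : ℕ) (t : ℕ) (ht : t < T) (h : t + 1 < T)
    (s : Fin t → V) (v : V) (i : Fin t) :
    pref V T ⟨⟨t+1, h⟩, Fin.snoc s v⟩ (Fin.castSucc i) = pref V T ⟨⟨t, ht⟩, s⟩ i := by
  refine ctx_ext _ _ rfl fun j hj hj' => ?_
  simp only [pref, Fin.castLE]
  exact snoc_lt s v j (by exact lt_trans hj' i.isLt) _

lemma pref_snoc_last (V : Type) (T : ℕ) (t : ℕ) (ht : t < T) (h : t + 1 < T)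
    (s : Fin t → V) (v : V) :
    pref V T ⟨⟨t+1, h⟩, Fin.snoc s v⟩ (Fin.last t) = ⟨⟨t, ht⟩, s⟩ := by
  refine ctx_ext _ _ rfl fun j hj hj' => ?_
  simp only [pref, Fin.castLE]
  exact snoc_lt s v j hj' _

/-- prefix reward -/
noncomputable def prefR (V : Type) [Fintype V] (T : ℕ) (r : Ctx V T × Option V → ℝ)
    (t : ℕ) (ht : t < T) (s : Fin t → V) : ℝ :=
  ∑ i : Fin t, r (pref V T ⟨⟨t, ht⟩, s⟩ i, some (s i))

lemma Rr_eq (V : Type) [Fintype V] (T : ℕ) (r : Ctx V T × Option V → ℝ)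
    (t : ℕ) (ht : t < T) (s : Fin t → V) :
    Rr V T r ⟨⟨t, ht⟩, s⟩ = prefR V T r t ht s + r (⟨⟨t, ht⟩, s⟩, none) := rfl

lemma prefR_snoc (V : Type) [Fintype V] (T : ℕ) (r : Ctx V T × Option V → ℝ)
    (t : ℕ) (ht : t < T) (h : t + 1 < T) (s : Fin t → V) (v : V) :
    prefR V T r (t+1) h (Fin.snoc s v) = prefR V T r t ht s + r (⟨⟨t, ht⟩, s⟩, some v) := by
  unfold prefR
  rw [Fin.sum_univ_castSucc]
  congr 1
  · refine Finset.sum_congr rfl fun i _ => ?_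
    rw [pref_snoc_castSucc V T t ht h s v i, Fin.snoc_castSucc]
  · rw [pref_snoc_last V T t ht h s v, Fin.snoc_last]

noncomputable def Pt (V : Type) [Fintype V] (T : ℕ) (r : Ctx V T × Option V → ℝ)
    (t : ℕ) (ht : t < T) : ℝ :=
  ∑ s : Fin t → V, Real.exp (prefR V T r t ht s) * Zt V T r t ht s

noncomputable def ebar (V : Type) [Fintype V] (T : ℕ) (r : Ctx V T × Option V → ℝ)
    (u : ℕ) : ℝ :=
  if h : u < T then ∑ s : Fin u → V, Real.exp (Rr V T r ⟨⟨u, h⟩, s⟩) else 0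

def snocEquiv (V : Type) (t : ℕ) : (Fin t → V) × V ≃ (Fin (t+1) → V) where
  toFun p := Fin.snoc p.1 p.2
  invFun f := (Fin.init f, f (Fin.last t))
  left_inv p := by simp
  right_inv f := by simp [Fin.snoc_init_self]

lemma Pt_step (V : Type) [Fintype V] (T : ℕ) (r : Ctx V T × Option V → ℝ)
    (t : ℕ) (ht : t < T) :
    Pt V T r t ht = ebar V T r t + (if h : t + 1 < T then Pt V T r (t+1) h else 0) := by
  by_cases h : t + 1 < T
  · rw [dif_pos h]
    unfold Pt
    have expand : ∀ s : Fin t → V,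
        Real.exp (prefR V T r t ht s) * Zt V T r t ht s
          = Real.exp (Rr V T r ⟨⟨t, ht⟩, s⟩) +
            ∑ v : V, Real.exp (prefR V T r (t+1) h (Fin.snoc s v)) *
                Zt V T r (t+1) h (Fin.snoc s v) := by
      intro s
      rw [Zt, mul_add, Rr_eq, Real.exp_add, dif_pos h, Finset.mul_sum]
      congr 1
      refine Finset.sum_congr rfl fun v _ => ?_
      rw [prefR_snoc V T r t ht h s v, Real.exp_add]
      ring
    rw [Finset.sum_congr rfl fun s _ => expand s, Finset.sum_add_distrib]
    congr 1
    · rw [ebar, dif_pos ht]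
    · rw [← Equiv.sum_comp (snocEquiv V t)
        (fun f => Real.exp (prefR V T r (t+1) h f) * Zt V T r (t+1) h f),
        Fintype.sum_prod_type]
      simp only [snocEquiv, Equiv.coe_fn_mk]
  · rw [dif_neg h]
    unfold Pt
    rw [ebar, dif_pos ht, add_zero]
    refine Finset.sum_congr rfl fun s _ => ?_
    rw [Zt, dif_neg h, add_zero, Rr_eq, Real.exp_add]

lemma Pt_eq (V : Type) [Fintype V] (T : ℕ) (r : Ctx V T × Option V → ℝ) :
    ∀ (t : ℕ) (ht : t < T), Pt V T r t ht = ∑ u ∈ Finset.Ico t T, ebar V T r u := by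
  intro t ht
  rw [Pt_step]
  have hins : Finset.Ico t T = insert t (Finset.Ico (t+1) T) :=
    (Finset.insert_Ico_succ_left_eq_Ico ht).symm
  rw [hins, Finset.sum_insert (by simp)]
  congr 1
  by_cases h : t + 1 < T
  · rw [dif_pos h, Pt_eq V T r (t+1) h]
  · rw [dif_neg h, Finset.Ico_eq_empty (by omega), Finset.sum_empty]
termination_by t => T - t
decreasing_by omega

lemma sum_exp_Rr (V : Type) [Fintype V] (T : ℕ) (hT : 0 < T) (r : Ctx V T × Option V → ℝ) :
    ∑ y : Ctx V T, Real.exp (Rr V T r y) = Zt V T r 0 hT (Fin.elim0) := by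
  have h1 : ∑ y : Ctx V T, Real.exp (Rr V T r y)
      = ∑ u : Fin T, ∑ s : Fin (u : ℕ) → V, Real.exp (Rr V T r ⟨u, s⟩) := by
    rw [← Finset.univ_sigma_univ, Finset.sum_sigma]
  have h2 : ∀ u : Fin T, ∑ s : Fin (u : ℕ) → V, Real.exp (Rr V T r ⟨u, s⟩)
      = ebar V T r (u : ℕ) := by
    intro u
    rw [ebar, dif_pos u.isLt]
  have h3 : Pt V T r 0 hT = Zt V T r 0 hT (Fin.elim0) := by
    unfold Pt
    rw [Fintype.sum_subsingleton _ (Fin.elim0 : Fin 0 → V)]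
    have : prefR V T r 0 hT Fin.elim0 = 0 := by
      unfold prefR; exact Finset.sum_of_isEmpty _
    rw [this, Real.exp_zero, one_mul]
  rw [h1, Finset.sum_congr rfl fun u _ => h2 u, ← h3, Pt_eq V T r 0 hT]
  rw [← Finset.range_eq_Ico, ← Fin.sum_univ_eq_sum_range]

/-- the context of depth `j` along `y`, for `j ≤ |y|`. -/
def ctxAt (V : Type) (T : ℕ) (y : Ctx V T) (j : Fin ((y.1 : ℕ) + 1)) : Ctx V T :=
  ⟨⟨(j : ℕ), lt_of_le_of_lt (Nat.lt_succ_iff.mp j.isLt) y.1.isLt⟩,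
    fun i => y.2 (Fin.castLE (Nat.lt_succ_iff.mp j.isLt) i)⟩

lemma ctxAt_castSucc (V : Type) (T : ℕ) (y : Ctx V T) (i : Fin (y.1 : ℕ)) :
    ctxAt V T y (Fin.castSucc i) = pref V T y i := by
  refine ctx_ext _ _ rfl fun j hj hj' => ?_
  simp only [ctxAt, pref, Fin.castLE]

lemma ctxAt_last (V : Type) (T : ℕ) (y : Ctx V T) :
    ctxAt V T y (Fin.last (y.1 : ℕ)) = y := by
  refine ctx_ext _ _ rfl fun j hj hj' => ?_
  simp only [ctxAt, Fin.castLE]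

lemma ctxAt_zero (V : Type) (T : ℕ) (hT : 1 ≤ T) (y : Ctx V T) :
    ctxAt V T y 0 = (⟨⟨0, hT⟩, Fin.elim0⟩ : Ctx V T) := by
  refine ctx_ext _ _ rfl fun j hj hj' => ?_
  exact absurd hj (by simp [ctxAt])

lemma ext_pref (V : Type) (T : ℕ) (y : Ctx V T) (i : Fin (y.1 : ℕ))
    (h : ((pref V T y i).1 : ℕ) + 1 < T) :
    ext V T (pref V T y i) (y.2 i) h = ctxAt V T y i.succ := by
  obtain ⟨⟨n, hn⟩, f⟩ := y
  refine ctx_ext _ _ rfl fun j hj hj' => ?_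
  simp only [_root_.ext, pref, ctxAt, Fin.castLE] at hj hj' ⊢
  by_cases hji : j < (i : ℕ)
  · rw [snoc_lt _ (f i) j hji hj]
  · have hlast : (⟨j, hj⟩ : Fin ((i : ℕ) + 1)) = Fin.last (i : ℕ) :=
      Fin.ext (by simp; omega)
    conv_lhs => rw [hlast]
    rw [Fin.snoc_last]
    exact congrArg f (Fin.ext (by simp; omega))

lemma Mmap_some (V : Type) [Fintype V] (T : ℕ) (r : Ctx V T × Option V → ℝ)
    (s : Ctx V T) (v : V) (h : (s.1 : ℕ) + 1 < T) :
    Mmap V T r (s, some v) = r (s, some v) + Vq V T (Mmap V T r) (ext V T s v h) := by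
  obtain ⟨⟨t, ht⟩, f⟩ := s
  exact Mgo_some V T r t ht h f v

lemma Mmap_none (V : Type) [Fintype V] (T : ℕ) (r : Ctx V T × Option V → ℝ)
    (s : Ctx V T) : Mmap V T r (s, none) = r (s, none) := by
  obtain ⟨⟨t, ht⟩, f⟩ := s
  show Mgo V T r t ht f none = _
  rw [Mgo]

lemma log_pARM (V : Type) [Fintype V] (T : ℕ) (q' : Ctx V T × Option V → ℝ) (y : Ctx V T) :
    Real.log (pARM V T q' y)
      = (∑ i : Fin (y.1 : ℕ), (q' (pref V T y i, some (y.2 i)) - Vq V T q' (pref V T y i)))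
        + (q' (y, none) - Vq V T q' y) := by
  unfold pARM piq
  rw [← Real.exp_sum, ← Real.exp_add, Real.log_exp]

lemma pARM_pos (V : Type) [Fintype V] (T : ℕ) (q' : Ctx V T × Option V → ℝ) (y : Ctx V T) :
    0 < pARM V T q' y := by
  unfold pARM piq
  exact mul_pos (Finset.prod_pos fun i _ => Real.exp_pos _) (Real.exp_pos _)

lemma Rr_decomp (V : Type) [Fintype V] (T : ℕ) (r : Ctx V T × Option V → ℝ) (y : Ctx V T) :
    Rr V T r y = (∑ i : Fin (y.1 : ℕ),
        (Mmap V T r (pref V T y i, some (y.2 i)) - Vq V T (Mmap V T r) (ctxAt V T y i.succ)))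
      + Mmap V T r (y, none) := by
  unfold Rr
  rw [Mmap_none]
  congr 1
  refine Finset.sum_congr rfl fun i _ => ?_
  have h : ((pref V T y i).1 : ℕ) + 1 < T :=
    lt_of_le_of_lt (Nat.succ_le_of_lt i.isLt) y.1.isLt
  rw [Mmap_some V T r (pref V T y i) (y.2 i) h, ext_pref V T y i h]
  ring

lemma Rr_logpARM (V : Type) [Fintype V] (T : ℕ) (hT : 1 ≤ T)
    (r : Ctx V T × Option V → ℝ) (y : Ctx V T) :
    Rr V T r y = Real.log (pARM V T (Mmap V T r) y)
      + Vq V T (Mmap V T r) (⟨⟨0, hT⟩, Fin.elim0⟩ : Ctx V T) := by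
  rw [log_pARM, Rr_decomp]
  rw [Finset.sum_sub_distrib, Finset.sum_sub_distrib]
  have shift : ∑ i : Fin (y.1 : ℕ), Vq V T (Mmap V T r) (ctxAt V T y i.succ)
      = (∑ i : Fin (y.1 : ℕ), Vq V T (Mmap V T r) (pref V T y i))
        + Vq V T (Mmap V T r) y
        - Vq V T (Mmap V T r) (⟨⟨0, hT⟩, Fin.elim0⟩ : Ctx V T) := by
    have h1 := Fin.sum_univ_castSucc (f := fun j => Vq V T (Mmap V T r) (ctxAt V T y j))
    have h2 := Fin.sum_univ_succ (f := fun j => Vq V T (Mmap V T r) (ctxAt V T y j))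
    simp only [ctxAt_castSucc, ctxAt_last, ctxAt_zero V T hT] at h1 h2
    linarith
  rw [shift]
  ring

lemma Vq_le_of_le (V : Type) [Fintype V] (T : ℕ) (q1 q2 : Ctx V T × Option V → ℝ)
    (ε : ℝ) (h : ∀ p, q1 p - q2 p ≤ ε) (s : Ctx V T) :
    Vq V T q1 s ≤ Vq V T q2 s + ε := by
  unfold Vq
  have hpos2 : 0 < ∑ a ∈ adm V T s, Real.exp (q2 (s, a)) :=
    sum_exp_pos _ (adm_nonempty V T s) _
  have hle : ∑ a ∈ adm V T s, Real.exp (q1 (s, a))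
      ≤ (∑ a ∈ adm V T s, Real.exp (q2 (s, a))) * Real.exp ε := by
    rw [Finset.sum_mul]
    refine Finset.sum_le_sum fun a _ => ?_
    rw [← Real.exp_add]
    exact Real.exp_le_exp.2 (by linarith [h (s, a)])
  calc Real.log (∑ a ∈ adm V T s, Real.exp (q1 (s, a)))
      ≤ Real.log ((∑ a ∈ adm V T s, Real.exp (q2 (s, a))) * Real.exp ε) :=
        Real.log_le_log (sum_exp_pos _ (adm_nonempty V T s) _) hle
    _ = Real.log (∑ a ∈ adm V T s, Real.exp (q2 (s, a))) + ε := by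
        rw [Real.log_mul (ne_of_gt hpos2) (Real.exp_ne_zero ε), Real.log_exp]

lemma abs_Vq_diff_le (V : Type) [Fintype V] (T : ℕ) (q1 q2 : Ctx V T × Option V → ℝ)
    (ε : ℝ) (h : ∀ p, |q1 p - q2 p| ≤ ε) (s : Ctx V T) :
    |Vq V T q1 s - Vq V T q2 s| ≤ ε := by
  rw [abs_le]
  constructor
  · have := Vq_le_of_le V T q2 q1 ε (fun p => by have := h p; rw [abs_le] at this; linarith) s
    linarith
  · have := Vq_le_of_le V T q1 q2 ε (fun p => by have := h p; rw [abs_le] at this; linarith) s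
    linarith



/-- **KL bound for distilling EBMs into ARMs.**
For all `r, q : 𝒮(x) × 𝒜 → ℝ` and every prompt `x`,
`KL(p^EBM_{R_r}(·|x), p^ARM_q(·|x)) ≤ 2T ⬝ max_{s, y} |q*(s,y) - q(s,y)|`,
where `q* = M(r)`. -/
theorem kl_distillation_bound (V : Type) [Fintype V] (T : ℕ) (hT : 1 ≤ T)
    (r q qstar : Ctx V T × Option V → ℝ) (hqstar : qstar = Mmap V T r) :
    (∑ y : Ctx V T, pEBM V T r y * Real.log (pEBM V T r y / pARM V T q y)) ≤
      2 * (T : ℝ) *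
        Finset.univ.sup' ⟨((⟨⟨0, hT⟩, Fin.elim0⟩ : Ctx V T), none), Finset.mem_univ _⟩
          (fun p : Ctx V T × Option V => |qstar p - q p|) := by
  subst hqstar
  set qstar := Mmap V T r with hq
  set ε := Finset.univ.sup' ⟨((⟨⟨0, hT⟩, Fin.elim0⟩ : Ctx V T), none), Finset.mem_univ _⟩
    (fun p : Ctx V T × Option V => |qstar p - q p|) with hε
  have hεle : ∀ p : Ctx V T × Option V, |qstar p - q p| ≤ ε := by
    intro p
    rw [hε]
    exact Finset.le_sup' (fun p : Ctx V T × Option V => |qstar p - q p|) (Finset.mem_univ p)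
  have hε0 : 0 ≤ ε := le_trans (abs_nonneg _) (hεle ((⟨⟨0, hT⟩, Fin.elim0⟩ : Ctx V T), none))
  -- Aebm = Vq* at root
  have hroot : Aebm V T r = Vq V T qstar (⟨⟨0, hT⟩, Fin.elim0⟩ : Ctx V T) := by
    rw [Aebm, sum_exp_Rr V T hT r, hq, Vq_Mmap]
  -- log pEBM = log pARM qstar
  have hlogEBM : ∀ y : Ctx V T, Real.log (pEBM V T r y) = Real.log (pARM V T qstar y) := by
    intro y
    rw [pEBM, Real.log_exp, Rr_logpARM V T hT r y, hroot]
    ring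
  -- pointwise bound
  have hpt : ∀ y : Ctx V T,
      Real.log (pEBM V T r y) - Real.log (pARM V T q y) ≤ 2 * (T : ℝ) * ε := by
    intro y
    rw [hlogEBM y, log_pARM, log_pARM]
    have hbound : ∀ s : Ctx V T, ∀ a : Option V,
        (qstar (s, a) - Vq V T qstar s) - (q (s, a) - Vq V T q s) ≤ 2 * ε := by
      intro s a
      have h1 := hεle (s, a)
      have h2 := abs_Vq_diff_le V T qstar q ε hεle s
      rw [abs_le] at h1 h2
      linarith
    have hsum : ∀ i : Fin ((y.1 : ℕ)),
        (qstar (pref V T y i, some (y.2 i)) - Vq V T qstar (pref V T y i))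
          - (q (pref V T y i, some (y.2 i)) - Vq V T q (pref V T y i)) ≤ 2 * ε :=
      fun i => hbound _ _
    have hlen : ((y.1 : ℕ) : ℝ) + 1 ≤ (T : ℝ) := by
      have := y.1.isLt
      exact_mod_cast this
    have hmain : (∑ i : Fin (y.1 : ℕ),
          ((qstar (pref V T y i, some (y.2 i)) - Vq V T qstar (pref V T y i))
            - (q (pref V T y i, some (y.2 i)) - Vq V T q (pref V T y i))))
        ≤ (y.1 : ℕ) * (2 * ε) := by
      calc _ ≤ ∑ _i : Fin (y.1 : ℕ), 2 * ε := Finset.sum_le_sum fun i _ => hsum i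
        _ = (y.1 : ℕ) * (2 * ε) := by
            rw [Finset.sum_const, Finset.card_univ, Fintype.card_fin, nsmul_eq_mul]
    have hfin := hbound y none
    have expand : (∑ i : Fin (y.1 : ℕ),
          (qstar (pref V T y i, some (y.2 i)) - Vq V T qstar (pref V T y i)))
        - (∑ i : Fin (y.1 : ℕ),
          (q (pref V T y i, some (y.2 i)) - Vq V T q (pref V T y i)))
        = ∑ i : Fin (y.1 : ℕ),
          ((qstar (pref V T y i, some (y.2 i)) - Vq V T qstar (pref V T y i))
            - (q (pref V T y i, some (y.2 i)) - Vq V T q (pref V T y i))) :=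
      (Finset.sum_sub_distrib _ _).symm
    nlinarith [hmain, hfin, hlen, hε0]
  -- sum of pEBM is 1
  have hsum1 : ∑ y : Ctx V T, pEBM V T r y = 1 := by
    have hpos : 0 < ∑ y : Ctx V T, Real.exp (Rr V T r y) := by
      refine sum_exp_pos _ ⟨(⟨⟨0, hT⟩, Fin.elim0⟩ : Ctx V T), Finset.mem_univ _⟩ _
    unfold pEBM
    have : ∀ y : Ctx V T, Real.exp (Rr V T r y - Aebm V T r)
        = Real.exp (Rr V T r y) * Real.exp (-Aebm V T r) := fun y => by
      rw [← Real.exp_add]; ring_nf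
    rw [Finset.sum_congr rfl fun y _ => this y, ← Finset.sum_mul, Aebm,
      Real.exp_neg, Real.exp_log hpos]
    exact mul_inv_cancel₀ (ne_of_gt hpos)
  -- conclude
  calc (∑ y : Ctx V T, pEBM V T r y * Real.log (pEBM V T r y / pARM V T q y))
      ≤ ∑ y : Ctx V T, pEBM V T r y * (2 * (T : ℝ) * ε) := by
        refine Finset.sum_le_sum fun y _ => ?_
        have hpe : (0:ℝ) < pEBM V T r y := Real.exp_pos _
        refine mul_le_mul_of_nonneg_left ?_ hpe.le
        rw [Real.log_div (ne_of_gt hpe) (ne_of_gt (pARM_pos V T q y))]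
        exact hpt y
    _ = 2 * (T : ℝ) * ε := by rw [← Finset.sum_mul, hsum1, one_mul]
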